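/- arXiv:1012.5835 — 6 statements merged into one kernel-verified Lean document; each statement's English description precedes it below -/
import Mathlib

section
/- For every rational number k with k ∉ {0, 2, −2}, the quantities a(k), b(k), c(k) are all nonzero, and the three products a(k)b(k), b(k)c(k), a(k)c(k) are pairwise distinct. -/
lemma num_den_not_both_div (k : ℚ) (hn : (3:ℤ) ∣ k.num) (hd : (3:ℤ) ∣ (k.den:ℤ)) : False := by
  have hc := k.reduced
  have h1 : 3 ∣ k.num.natAbs := by
    have := Int.natAbs_dvd_natAbs.mpr hn
    simpa using this
  have h2 : (3:ℕ) ∣ k.den := Int.ofNat_dvd.mp (by exact_mod_cast hd)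
  have : (3:ℕ) ∣ 1 := hc ▸ Nat.dvd_gcd h1 h2
  omega

lemma rat_num_eq (k : ℚ) : (k.num : ℚ) = k * (k.den:ℚ) := by
  have hd0 : ((k.den:ℚ)) ≠ 0 := by exact_mod_cast k.den_ne_zero
  have h := Rat.num_div_den k
  exact ((div_eq_iff hd0).mp h)

lemma int_of_rat3 (k : ℚ) (a b c d : ℤ)
    (h : (a:ℚ) * k^3 + b * k^2 + c * k + d = 0) :
    a * k.num^3 + b * k.num^2 * k.den + c * k.num * k.den^2 + d * k.den^3 = 0 := by
  have key : ((a * k.num^3 + b * k.num^2 * k.den + c * k.num * k.den^2 + d * k.den^3 : ℤ) : ℚ)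
      = (k.den:ℚ)^3 * ((a:ℚ) * k^3 + b * k^2 + c * k + d) := by
    push_cast [rat_num_eq k]; ring
  rw [h, mul_zero] at key
  exact_mod_cast key

lemma int_of_rat2 (k : ℚ) (a b c : ℤ)
    (h : (a:ℚ) * k^2 + b * k + c = 0) :
    a * k.num^2 + b * k.num * k.den + c * k.den^2 = 0 := by
  have key : ((a * k.num^2 + b * k.num * k.den + c * k.den^2 : ℤ) : ℚ)
      = (k.den:ℚ)^2 * ((a:ℚ) * k^2 + b * k + c) := by
    push_cast [rat_num_eq k]; ring
  rw [h, mul_zero] at key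
  exact_mod_cast key

lemma cubic_ne (k : ℚ) : k^3 - 8*k^2 + 4*k - 16 ≠ 0 := by
  intro h
  have h' := int_of_rat3 k 1 (-8) 4 (-16) (by push_cast; linarith)
  set n := k.num; set d := (k.den:ℤ)
  have hz : ((n : ZMod 3))^3 - 8*(n:ZMod 3)^2*d + 4*n*d^2 - 16*d^3 = 0 := by
    have := congrArg (Int.cast : ℤ → ZMod 3) h'
    push_cast at this
    linear_combination this
  have key : ∀ a b : ZMod 3, a^3 - 8*a^2*b + 4*a*b^2 - 16*b^3 = 0 → a = 0 ∧ b = 0 := by decide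
  obtain ⟨h1, h2⟩ := key _ _ hz
  exact num_den_not_both_div k
    ((ZMod.intCast_zmod_eq_zero_iff_dvd n 3).mp h1)
    ((ZMod.intCast_zmod_eq_zero_iff_dvd d 3).mp h2)

lemma quad1_ne (k : ℚ) : k^2 - 12*k + 4 ≠ 0 := by
  intro h
  have h' := int_of_rat2 k 1 (-12) 4 (by push_cast; linarith)
  set n := k.num; set d := (k.den:ℤ)
  have hz : ((n : ZMod 3))^2 - 12*(n:ZMod 3)*d + 4*d^2 = 0 := by
    have := congrArg (Int.cast : ℤ → ZMod 3) h'
    push_cast at this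
    linear_combination this
  have key : ∀ a b : ZMod 3, a^2 - 12*a*b + 4*b^2 = 0 → a = 0 ∧ b = 0 := by decide
  obtain ⟨h1, h2⟩ := key _ _ hz
  exact num_den_not_both_div k
    ((ZMod.intCast_zmod_eq_zero_iff_dvd n 3).mp h1)
    ((ZMod.intCast_zmod_eq_zero_iff_dvd d 3).mp h2)

lemma quad2_ne (k : ℚ) : 3*k^2 - 12*k - 4 ≠ 0 := by
  intro h
  have h' := int_of_rat2 k 3 (-12) (-4) (by push_cast; linarith)
  set n := k.num with hndef; set d := (k.den:ℤ) with hddef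
  -- mod 3 : -4 d^2 = 0 → 3 ∣ d
  have hz : 3*((n:ZMod 3))^2 - 12*(n:ZMod 3)*d - 4*d^2 = 0 := by
    have := congrArg (Int.cast : ℤ → ZMod 3) h'
    push_cast at this
    linear_combination this
  have keyd : ∀ a b : ZMod 3, 3*a^2 - 12*a*b - 4*b^2 = 0 → b = 0 := by decide
  have hd3 : (3:ℤ) ∣ d := (ZMod.intCast_zmod_eq_zero_iff_dvd d 3).mp (keyd _ _ hz)
  obtain ⟨e, he⟩ := id hd3
  have h2 : n^2 - 12*n*e - 12*e^2 = 0 := by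
    have : 3*(n^2 - 12*n*e - 12*e^2) = 0 := by rw [he] at h'; linarith
    linarith
  have hz2 : ((n : ZMod 3))^2 - 12*(n:ZMod 3)*e - 12*e^2 = 0 := by
    have := congrArg (Int.cast : ℤ → ZMod 3) h2
    push_cast at this
    linear_combination this
  have keyn : ∀ a b : ZMod 3, a^2 - 12*a*b - 12*b^2 = 0 → a = 0 := by decide
  have hn3 : (3:ℤ) ∣ n := (ZMod.intCast_zmod_eq_zero_iff_dvd n 3).mp (keyn _ _ hz2)
  exact num_den_not_both_div k hn3 hd3



/-- The side `a(k) = 5k² − 4k + 4` of the Heron triangle family. -/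
def sideA (k : ℚ) : ℚ := 5 * k ^ 2 - 4 * k + 4

/-- The side `b(k) = (1/2)k(k² − 4k + 20)` of the Heron triangle family. -/
def sideB (k : ℚ) : ℚ := (1 / 2) * k * (k ^ 2 - 4 * k + 20)

/-- The side `c(k) = (1/2)(k+2)(k² − 4)` of the Heron triangle family. -/
def sideC (k : ℚ) : ℚ := (1 / 2) * (k + 2) * (k ^ 2 - 4)

/-- for every rational `k ∉ {0, 2, −2}`, the quantities `a(k)`, `b(k)`,
`c(k)` are nonzero and the products `a(k)b(k)`, `b(k)c(k)`, `a(k)c(k)` are pairwise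
distinct. -/
theorem sides_nonzero_products_distinct (k : ℚ) (h0 : k ≠ 0) (h2 : k ≠ 2) (hm2 : k ≠ -2) :
    sideA k ≠ 0 ∧ sideB k ≠ 0 ∧ sideC k ≠ 0 ∧
    sideA k * sideB k ≠ sideB k * sideC k ∧
    sideB k * sideC k ≠ sideA k * sideC k ∧
    sideA k * sideB k ≠ sideA k * sideC k := by
  have hA : sideA k ≠ 0 := by
    simp only [sideA]; intro h; nlinarith [sq_nonneg (5*k-2)]
  have hq20 : k ^ 2 - 4 * k + 20 ≠ 0 := by intro h; nlinarith [sq_nonneg (k-2)]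
  have hB : sideB k ≠ 0 := by
    simp only [sideB]; exact mul_ne_zero (mul_ne_zero (by norm_num) h0) hq20
  have hp2 : k + 2 ≠ 0 := fun h => hm2 (by linarith)
  have hs2 : k - 2 ≠ 0 := sub_ne_zero.mpr h2
  have hC : sideC k ≠ 0 := by
    simp only [sideC]
    have hfac : k ^ 2 - 4 = (k - 2) * (k + 2) := by ring
    rw [hfac]
    exact mul_ne_zero (mul_ne_zero (by norm_num) hp2) (mul_ne_zero hs2 hp2)
  refine ⟨hA, hB, hC, ?_, ?_, ?_⟩
  · intro h
    have hAC : sideA k - sideC k ≠ 0 := by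
      intro h'
      apply cubic_ne k
      simp only [sideA, sideC] at h'
      linear_combination (-2) * h'
    rcases mul_eq_zero.mp (show sideB k * (sideA k - sideC k) = 0 by linear_combination h) with h' | h'
    exacts [hB h', hAC h']
  · intro h
    have hBA : sideB k - sideA k ≠ 0 := by
      intro h'
      have hfac : (k - 2) * (k ^ 2 - 12 * k + 4) = 0 := by
        simp only [sideA, sideB] at h'
        linear_combination 2 * h'
      rcases mul_eq_zero.mp hfac with h'' | h''
      exacts [hs2 h'', quad1_ne k h'']
    rcases mul_eq_zero.mp (show sideC k * (sideB k - sideA k) = 0 by linear_combination h) with h' | h'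
    exacts [hC h', hBA h']
  · intro h
    have hBC : sideB k - sideC k ≠ 0 := by
      intro h'
      apply quad2_ne k
      simp only [sideB, sideC] at h'
      linear_combination (-1) * h'
    rcases mul_eq_zero.mp (show sideA k * (sideB k - sideC k) = 0 by linear_combination h) with h' | h'
    exacts [hA h', hBC h']
end

section
/- For every rational number k, the discriminant Δ(k) = 16(A(k)² − 4B(k))B(k)² of the curve y² = x³ + A(k)x² + B(k)x satisfies the identity Δ(k) = (1/16)·k²·(k² − 4k + 20)²·(k³ − 8k² + 4k − 16)²·(k² − 12k + 4)²·(k − 2)⁴·(k + 2)⁴·(5k² − 4k + 4)²·(3k² − 12k − 4)². -/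
/-- The coefficient `A(k) = a(k)b(k) + b(k)c(k) − 2a(k)c(k)` of the shifted curve
`y² = x³ + Ax² + Bx`. -/
def coeffA (k : ℚ) : ℚ := sideA k * sideB k + sideB k * sideC k - 2 * (sideA k * sideC k)

/-- The coefficient `B(k) = (a(k)b(k) − a(k)c(k))(b(k)c(k) − a(k)c(k))` of the shifted
curve `y² = x³ + Ax² + Bx`. -/
def coeffB (k : ℚ) : ℚ :=
  (sideA k * sideB k - sideA k * sideC k) * (sideB k * sideC k - sideA k * sideC k)

/-- the identity for the discriminant `Δ(k) = 16(A(k)² − 4B(k))B(k)²`. -/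
theorem discriminant_identity (k : ℚ) :
    16 * (coeffA k ^ 2 - 4 * coeffB k) * coeffB k ^ 2 =
      (1 / 16) * k ^ 2 * (k ^ 2 - 4 * k + 20) ^ 2 * (k ^ 3 - 8 * k ^ 2 + 4 * k - 16) ^ 2
        * (k ^ 2 - 12 * k + 4) ^ 2 * (k - 2) ^ 4 * (k + 2) ^ 4 * (5 * k ^ 2 - 4 * k + 4) ^ 2
        * (3 * k ^ 2 - 12 * k - 4) ^ 2 := by
  unfold coeffA coeffB sideA sideB sideC; ring
end

section
/- For a rational number k, the discriminant Δ(k) = 16(A(k)² − 4B(k))B(k)² of the curve y² = x³ + A(k)x² + B(k)x vanishes if and only if k ∈ {0, 2, −2}; in particular, for every rational k ∉ {0, 2, −2} the Weierstrass curve y² = (x + a(k)b(k))(x + b(k)c(k))(x + a(k)c(k)) is nonsingular, i.e., an elliptic curve over ℚ. -/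
/-- The elliptic curve `E_k : y² = (x + ab)(x + bc)(x + ac)`, written as the Weierstrass
curve `y² = x³ + (ab + bc + ca)x² + abc(a + b + c)x + (abc)²`. -/
def Ek (k : ℚ) : WeierstrassCurve.Affine ℚ where
  a₁ := 0
  a₂ := sideA k * sideB k + sideB k * sideC k + sideC k * sideA k
  a₃ := 0
  a₄ := sideA k * sideB k * sideC k * (sideA k + sideB k + sideC k)
  a₆ := (sideA k * sideB k * sideC k) ^ 2

lemma den_one_of_sq (x : ℚ) (m : ℤ) (h : (x.num:ℚ)^2 = m * (x.den:ℚ)^2) : (x.den:ℤ) = 1 := by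
  have hz : x.num^2 = m * (x.den:ℤ)^2 := by exact_mod_cast h
  have hdvd : (x.den:ℤ) ∣ x.num^2 := ⟨m * x.den, by rw [hz]; ring⟩
  have hdvd' : x.den ∣ x.num.natAbs^2 := by
    have := Int.natAbs_dvd_natAbs.mpr hdvd
    simpa [Int.natAbs_pow] using this
  have hc : Nat.Coprime x.den (x.num.natAbs^2) := (x.reduced.pow_left 2).symm
  exact_mod_cast hc.eq_one_of_dvd hdvd'

lemma no_sq (m : ℤ) (hm : ∀ n : ℤ, n^2 ≠ m) (x : ℚ) : x^2 ≠ (m:ℚ) := by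
  intro h
  have hd : (x.den:ℚ) ≠ 0 := by exact_mod_cast x.den_ne_zero
  have hx := Rat.num_div_den x
  have key : (x.num:ℚ)^2 = m * (x.den:ℚ)^2 := by
    rw [← hx] at h; field_simp at h; rw [mul_comm (m:ℚ)]; exact_mod_cast h
  have hden := den_one_of_sq x m key
  have hz : x.num^2 = m := by
    have : x.num^2 = m * (x.den:ℤ)^2 := by exact_mod_cast key
    rw [hden] at this; simpa using this
  exact hm x.num hz

lemma no_sqrt48 (x : ℚ) : x^2 ≠ 48 := by
  have := no_sq 48 (fun n hn => by
    have h1 : n ≤ 7 := by nlinarith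
    have h2 : -7 ≤ n := by nlinarith
    interval_cases n <;> omega) x
  exact_mod_cast this

lemma no_sqrt32 (x : ℚ) : x^2 ≠ 32 := by
  have := no_sq 32 (fun n hn => by
    have h1 : n ≤ 6 := by nlinarith
    have h2 : -6 ≤ n := by nlinarith
    interval_cases n <;> omega) x
  exact_mod_cast this

lemma sideA_ne (k : ℚ) : sideA k ≠ 0 := by
  unfold sideA; intro h; nlinarith [sq_nonneg k, sq_nonneg (k - 2)]

lemma sideB_ne (k : ℚ) (h0 : k ≠ 0) : sideB k ≠ 0 := by
  unfold sideB; intro h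
  have hq : k ^ 2 - 4 * k + 20 ≠ 0 := by intro h'; nlinarith [sq_nonneg (k - 2)]
  have := mul_ne_zero (mul_ne_zero (by norm_num : (1:ℚ)/2 ≠ 0) h0) hq
  exact this h

lemma sideC_ne (k : ℚ) (h2 : k ≠ 2) (h2' : k ≠ -2) : sideC k ≠ 0 := by
  unfold sideC; intro h
  have e : (1/2 : ℚ) * (k + 2) * (k^2 - 4) = (1/2) * (k + 2)^2 * (k - 2) := by ring
  rw [e] at h
  rcases mul_eq_zero.mp h with h' | h'
  · rcases mul_eq_zero.mp h' with h'' | h''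
    · norm_num at h''
    · exact h2' (by have := pow_eq_zero_iff (n := 2) (by norm_num) |>.mp h''; linarith)
  · exact h2 (by linarith)

lemma sub_AC_ne (k : ℚ) : sideA k - sideC k ≠ 0 := by
  intro h
  apply cubic_ne k
  unfold sideA sideC at h
  linear_combination (-2 : ℚ) * h

lemma sub_BC_ne (k : ℚ) : sideB k - sideC k ≠ 0 := by
  intro h
  apply no_sqrt48 (3 * (k - 2))
  unfold sideB sideC at h
  linear_combination (-3 : ℚ) * h

lemma sub_BA_ne (k : ℚ) (h2 : k ≠ 2) : sideB k - sideA k ≠ 0 := by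
  intro h
  have e : sideB k - sideA k = (1/2) * (k - 2) * (k^2 - 12*k + 4) := by
    unfold sideA sideB; ring
  rw [e] at h
  rcases mul_eq_zero.mp h with h' | h'
  · rcases mul_eq_zero.mp h' with h'' | h''
    · norm_num at h''
    · exact h2 (by linarith)
  · exact no_sqrt32 (k - 6) (by linear_combination h')

lemma disc_factor (k : ℚ) :
    16 * (coeffA k ^ 2 - 4 * coeffB k) * coeffB k ^ 2 =
      16 * (sideB k * (sideA k - sideC k))^2 * (sideA k * (sideB k - sideC k))^2 *
        (sideC k * (sideB k - sideA k))^2 := by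
  unfold coeffA coeffB; ring

lemma disc_ne (k : ℚ) (h0 : k ≠ 0) (h2 : k ≠ 2) (h2' : k ≠ -2) :
    16 * (coeffA k ^ 2 - 4 * coeffB k) * coeffB k ^ 2 ≠ 0 := by
  rw [disc_factor]
  have h16 : (16 : ℚ) ≠ 0 := by norm_num
  exact mul_ne_zero (mul_ne_zero (mul_ne_zero h16
    (pow_ne_zero _ (mul_ne_zero (sideB_ne k h0) (sub_AC_ne k))))
    (pow_ne_zero _ (mul_ne_zero (sideA_ne k) (sub_BC_ne k))))
    (pow_ne_zero _ (mul_ne_zero (sideC_ne k h2 h2') (sub_BA_ne k h2)))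

lemma Ek_disc (k : ℚ) : (Ek k).Δ = 16 * (coeffA k ^ 2 - 4 * coeffB k) * coeffB k ^ 2 := by
  simp only [WeierstrassCurve.Δ, WeierstrassCurve.b₂, WeierstrassCurve.b₄,
    WeierstrassCurve.b₆, WeierstrassCurve.b₈, Ek, coeffA, coeffB]
  ring

/-- the discriminant `Δ(k) = 16(A(k)² − 4B(k))B(k)²` vanishes iff
`k ∈ {0, 2, −2}`; in particular, for `k ∉ {0, 2, −2}` the Weierstrass curve `E_k` is
nonsingular, i.e. an elliptic curve over `ℚ`. -/
theorem discriminant_vanishes_iff :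
    (∀ k : ℚ, 16 * (coeffA k ^ 2 - 4 * coeffB k) * coeffB k ^ 2 = 0 ↔
      (k = 0 ∨ k = 2 ∨ k = -2)) ∧
    (∀ k : ℚ, k ≠ 0 → k ≠ 2 → k ≠ -2 → (Ek k).Δ ≠ 0) := by
  constructor
  · intro k
    constructor
    · intro h
      by_contra hc
      push_neg at hc
      exact disc_ne k hc.1 hc.2.1 hc.2.2 h
    · rintro (rfl | rfl | rfl) <;>
        norm_num [coeffA, coeffB, sideA, sideB, sideC]
  · intro k h0 h2 h2'
    rw [Ek_disc]
    exact disc_ne k h0 h2 h2'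
end

section
/- For every rational number k > 2, the quantities a(k), b(k), c(k) are positive and satisfy the strict triangle inequalities a(k) + b(k) > c(k), a(k) + c(k) > b(k), and b(k) + c(k) > a(k); hence they are the side lengths of a Heron triangle whose area k(k² − 4)² is rational. -/
/-- for rational `k > 2`, the quantities `a(k)`, `b(k)`, `c(k)` are
positive and satisfy the strict triangle inequalities; hence they are the side lengths of
a Heron triangle whose (rational) area is `k(k² − 4)²`, i.e. the Heron product equals
the square of this rational number. -/
theorem heron_triangle_of_two_lt (k : ℚ) (hk : 2 < k) :
    0 < sideA k ∧ 0 < sideB k ∧ 0 < sideC k ∧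
    sideC k < sideA k + sideB k ∧ sideB k < sideA k + sideC k ∧
    sideA k < sideB k + sideC k ∧
    ((sideA k + sideB k + sideC k) / 2)
      * ((sideA k + sideB k + sideC k) / 2 - sideA k)
      * ((sideA k + sideB k + sideC k) / 2 - sideB k)
      * ((sideA k + sideB k + sideC k) / 2 - sideC k) = (k * (k ^ 2 - 4) ^ 2) ^ 2 := by
  unfold sideA sideB sideC
  refine ⟨by nlinarith, by nlinarith, by nlinarith, by nlinarith, by nlinarith, by nlinarith [mul_pos (mul_pos (sub_pos.mpr hk) (sub_pos.mpr hk)) (sub_pos.mpr hk)], by ring⟩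
end

section
/- Let a, b, c, u, v be rational numbers with u ≠ 0 satisfying v² = u(u − a)(u − b)(u − c). Then ζ = 1/u and η = v/u² satisfy η² = (1 − aζ)(1 − bζ)(1 − cζ), and furthermore x = −abc/u and y = abc·v/u² satisfy y² = (x + ab)(x + bc)(x + ac). -/
/-- the change of coordinates `(u, v) → (ζ, η) = (1/u, v/u²)` followed by
`(ζ, η) → (x, y) = (−abcζ, abcη)` transforms `v² = u(u−a)(u−b)(u−c)` into
`η² = (1 − aζ)(1 − bζ)(1 − cζ)` and then into `y² = (x + ab)(x + bc)(x + ac)`. -/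
theorem coordinate_change (a b c u v : ℚ) (hu : u ≠ 0)
    (h : v ^ 2 = u * (u - a) * (u - b) * (u - c)) :
    (v / u ^ 2) ^ 2 = (1 - a * (1 / u)) * (1 - b * (1 / u)) * (1 - c * (1 / u)) ∧
    (a * b * c * (v / u ^ 2)) ^ 2 =
      (-(a * b * c) / u + a * b) * (-(a * b * c) / u + b * c)
        * (-(a * b * c) / u + a * c) := by
  constructor
  · field_simp
    linear_combination h
  · field_simp
    linear_combination (a * b * c) ^ 2 * h
end

section
/- For a rational number k with k ∉ {0, 2, −2}, one of the Pythagorean relations a(k)² + b(k)² = c(k)², a(k)² + c(k)² = b(k)², or b(k)² + c(k)² = a(k)² holds if and only if k = 6 or k = 2/3. -/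
/-- The quartic `3k⁴ − 40k³ + 72k² − 160k + 48` has no rational roots
(rational root theorem: the denominator divides `3`, the numerator divides `48`,
and a finite check rules out every candidate). -/
lemma quartic_no_root (k : ℚ) : 3*k^4 - 40*k^3 + 72*k^2 - 160*k + 48 ≠ 0 := by
  intro h
  set n : ℤ := k.num with hn
  set d : ℤ := (k.den : ℤ) with hd
  have hdpos : 0 < d := by positivity
  have hkd : (n : ℚ) = k * (d : ℚ) := by
    rw [hn, hd]
    rw [Rat.mul_comm]
    exact_mod_cast (Rat.den_mul_eq_num k).symm
  have hEQ0 : (3*n^4 - 40*n^3*d + 72*n^2*d^2 - 160*n*d^3 + 48*d^4 : ℚ) = 0 := by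
    rw [hkd]
    linear_combination ((d:ℚ)^4) * h
  have hEQ : 3*n^4 - 40*n^3*d + 72*n^2*d^2 - 160*n*d^3 + 48*d^4 = 0 := by
    exact_mod_cast hEQ0
  have hcop : IsCoprime n d := by
    rw [Int.isCoprime_iff_gcd_eq_one]
    exact_mod_cast k.reduced
  have hd3 : d ∣ 3 := by
    have hdvd : d ∣ 3 * n ^ 4 :=
      ⟨40*n^3 - 72*n^2*d + 160*n*d^2 - 48*d^3, by linarith [hEQ]⟩
    exact ((IsCoprime.pow_right (n := 4) hcop.symm).dvd_of_dvd_mul_right) hdvd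
  have hn48 : n ∣ 48 := by
    have hdvd : n ∣ 48 * d ^ 4 :=
      ⟨-3*n^3 + 40*n^2*d - 72*n*d^2 + 160*d^3, by linarith [hEQ]⟩
    exact ((IsCoprime.pow_right (n := 4) hcop).dvd_of_dvd_mul_right) hdvd
  have hnu : n ≤ 48 := Int.le_of_dvd (by norm_num) hn48
  have hnl : -48 ≤ n := by
    have := Int.le_of_dvd (by norm_num : (0:ℤ) < 48) ((neg_dvd).mpr hn48)
    linarith
  have hd' : d = 1 ∨ d = 3 := by
    have h2 := Int.le_of_dvd (by norm_num) hd3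
    have h3 : d = 1 ∨ d = 2 ∨ d = 3 := by omega
    rcases h3 with h | h | h
    · exact Or.inl h
    · rw [h] at hd3; norm_num at hd3
    · exact Or.inr h
  rcases hd' with h1 | h1 <;> rw [h1] at hEQ <;>
    (interval_cases n <;> norm_num at hEQ)

/-- for rational `k ∉ {0, 2, −2}`, one of the Pythagorean relations among
`a(k)`, `b(k)`, `c(k)` holds iff `k = 6` or `k = 2/3`. -/
theorem pythagorean_iff (k : ℚ) (h0 : k ≠ 0) (h2 : k ≠ 2) (hm2 : k ≠ -2) :
    (sideA k ^ 2 + sideB k ^ 2 = sideC k ^ 2 ∨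
     sideA k ^ 2 + sideC k ^ 2 = sideB k ^ 2 ∨
     sideB k ^ 2 + sideC k ^ 2 = sideA k ^ 2) ↔ (k = 6 ∨ k = 2 / 3) := by
  constructor
  · rintro (h | h | h)
    · -- a² + b² = c² : leads to k * quartic = 0, impossible
      exfalso
      apply quartic_no_root k
      have hk : k * (3*k^4 - 40*k^3 + 72*k^2 - 160*k + 48) = 0 := by
        simp only [sideA, sideB, sideC] at h
        linear_combination -h
      rcases mul_eq_zero.mp hk with h' | h'
      · exact absurd h' h0
      · exact h'
    · -- a² + c² = b² : (3k-2)(k-2)(k+2)³ = 0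
      right
      have hk : (3*k - 2) * ((k - 2) * (k + 2)^3) = 0 := by
        simp only [sideA, sideB, sideC] at h
        linear_combination h
      rcases mul_eq_zero.mp hk with h' | h'
      · linarith [h']
      · rcases mul_eq_zero.mp h' with h'' | h''
        · exact absurd (by linarith : k = 2) h2
        · exact absurd (by
            have := pow_eq_zero_iff (n := 3) (by norm_num) |>.mp h''
            linarith : k = -2) hm2
    · -- b² + c² = a² : k(k-6)(k-2)(k+2)³ = 0
      left
      have hk : k * ((k - 6) * ((k - 2) * (k + 2)^3)) = 0 := by
        simp only [sideA, sideB, sideC] at h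
        linear_combination 2 * h
      rcases mul_eq_zero.mp hk with h' | h'
      · exact absurd h' h0
      rcases mul_eq_zero.mp h' with h' | h'
      · linarith
      rcases mul_eq_zero.mp h' with h' | h'
      · exact absurd (by linarith : k = 2) h2
      · exact absurd (by
          have := pow_eq_zero_iff (n := 3) (by norm_num) |>.mp h'
          linarith : k = -2) hm2
  · rintro (rfl | rfl)
    · right; right; norm_num [sideA, sideB, sideC]
    · right; left; norm_num [sideA, sideB, sideC]
end
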